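/- Let X be an n×n matrix with nonnegative entries that is sum-symmetric (for each index j, the j-th row sum equals the j-th column sum), and let a, b ∈ ℝⁿ form a monotone pair (meaning (a_i - a_j)(b_i - b_j) ≥ 0 for all i, j). Then the sum of the entries of the entrywise product a·(Xb) is at most the sum of the entries of X(a·b), where a·b denotes the entrywise product. -/

import Mathlib

open Matrix Finset

private lemma ssc_balance {n : ℕ} (X : Matrix (Fin n) (Fin n) ℝ)
    (hsym : ∀ j, ∑ k, X j k = ∑ k, X k j) (S : Finset (Fin n)) :
    ∑ j ∈ S, ∑ i ∈ Sᶜ, X i j = ∑ j ∈ Sᶜ, ∑ i ∈ S, X i j := by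
  have h1 : ∑ j ∈ S, ∑ i, X i j = ∑ j ∈ S, ∑ k, X j k :=
    Finset.sum_congr rfl fun j _ => (hsym j).symm
  have h2 : ∀ j, (∑ i, X i j) = ∑ i ∈ S, X i j + ∑ i ∈ Sᶜ, X i j :=
    fun j => (Finset.sum_add_sum_compl S _).symm
  have h3 : ∀ j, (∑ k, X j k) = ∑ k ∈ S, X j k + ∑ k ∈ Sᶜ, X j k :=
    fun j => (Finset.sum_add_sum_compl S _).symm
  have h4 : ∑ j ∈ S, ∑ i ∈ S, X i j = ∑ j ∈ S, ∑ k ∈ S, X j k := Finset.sum_comm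
  have h5 : ∑ j ∈ S, ∑ k ∈ Sᶜ, X j k = ∑ j ∈ Sᶜ, ∑ i ∈ S, X i j := Finset.sum_comm
  simp only [h2, h3, Finset.sum_add_distrib] at h1
  linarith

private lemma ssc_cut {n : ℕ} (X : Matrix (Fin n) (Fin n) ℝ) (hX : ∀ i j, 0 ≤ X i j)
    (hsym : ∀ j, ∑ k, X j k = ∑ k, X k j) (b : Fin n → ℝ) (S : Finset (Fin n)) (t : ℝ)
    (hbS : ∀ j ∈ S, t ≤ b j) (hbC : ∀ j ∈ (Sᶜ : Finset (Fin n)), b j ≤ t) :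
    ∑ j ∈ Sᶜ, b j * ∑ i ∈ S, X i j ≤ ∑ j ∈ S, b j * ∑ i ∈ Sᶜ, X i j := by
  calc ∑ j ∈ Sᶜ, b j * ∑ i ∈ S, X i j
      ≤ ∑ j ∈ Sᶜ, t * ∑ i ∈ S, X i j :=
        Finset.sum_le_sum fun j hj =>
          mul_le_mul_of_nonneg_right (hbC j hj) (Finset.sum_nonneg fun i _ => hX i j)
    _ = t * ∑ j ∈ Sᶜ, ∑ i ∈ S, X i j := by rw [Finset.mul_sum]
    _ = t * ∑ j ∈ S, ∑ i ∈ Sᶜ, X i j := by rw [ssc_balance X hsym S]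
    _ = ∑ j ∈ S, t * ∑ i ∈ Sᶜ, X i j := by rw [Finset.mul_sum]
    _ ≤ ∑ j ∈ S, b j * ∑ i ∈ Sᶜ, X i j :=
        Finset.sum_le_sum fun j hj =>
          mul_le_mul_of_nonneg_right (hbS j hj) (Finset.sum_nonneg fun i _ => hX i j)

private lemma ssc_key {n : ℕ} (X : Matrix (Fin n) (Fin n) ℝ) (hX : ∀ i j, 0 ≤ X i j)
    (hsym : ∀ j, ∑ k, X j k = ∑ k, X k j) (b : Fin n → ℝ) :
    ∀ (N : ℕ) (a : Fin n → ℝ), (Finset.image a Finset.univ).card ≤ N →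
      (∀ i j, 0 ≤ (a i - a j) * (b i - b j)) →
      ∑ i, ∑ j, X i j * a i * b j ≤ ∑ i, ∑ j, X i j * a j * b j := by
  intro N
  induction N with
  | zero =>
    intro a hcard _
    have h0 : (Finset.image a Finset.univ) = ∅ := Finset.card_eq_zero.mp (Nat.le_zero.mp hcard)
    have huniv : (Finset.univ : Finset (Fin n)) = ∅ := Finset.image_eq_empty.mp h0
    simp [huniv]
  | succ N ih =>
    intro a hcard hmono
    by_cases hN : (Finset.image a Finset.univ).card ≤ N
    · exact ih a hN hmono
    by_cases hconst : ∀ i j : Fin n, a i = a j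
    · refine le_of_eq (Finset.sum_congr rfl fun i _ => Finset.sum_congr rfl fun j _ => ?_)
      rw [hconst i j]
    push_neg at hconst
    obtain ⟨i₀, j₀, hij⟩ := hconst
    have hne : (Finset.image a Finset.univ).Nonempty :=
      ⟨a i₀, Finset.mem_image_of_mem a (Finset.mem_univ i₀)⟩
    set m : ℝ := (Finset.image a Finset.univ).min' hne with hm_def
    have hm_le : ∀ i, m ≤ a i := fun i =>
      Finset.min'_le _ _ (Finset.mem_image_of_mem a (Finset.mem_univ i))
    set S : Finset (Fin n) := Finset.univ.filter (fun i => m < a i) with hS_def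
    have hmemS : ∀ i : Fin n, i ∈ S ↔ m < a i := by
      intro i; simp [hS_def]
    have hout : ∀ i : Fin n, i ∉ S → a i = m := by
      intro i hi
      have h : ¬ m < a i := fun hlt => hi ((hmemS i).mpr hlt)
      exact le_antisymm (not_lt.mp h) (hm_le i)
    have hSne : S.Nonempty := by
      by_contra h
      rw [Finset.not_nonempty_iff_eq_empty] at h
      have h0 : a i₀ = m := hout i₀ (by simp [h])
      have h1 : a j₀ = m := hout j₀ (by simp [h])
      exact hij (h0.trans h1.symm)
    have hSCne : (Sᶜ : Finset (Fin n)).Nonempty := by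
      obtain ⟨i₁, _, hi₁⟩ := Finset.mem_image.mp ((Finset.image a Finset.univ).min'_mem hne)
      refine ⟨i₁, Finset.mem_compl.mpr ?_⟩
      intro hmem
      have := (hmemS i₁).mp hmem
      rw [hm_def, hi₁] at this
      exact lt_irrefl _ this
    have hSimne : (S.image a).Nonempty := hSne.image a
    set v₀ : ℝ := (S.image a).min' hSimne with hv₀_def
    set c : ℝ := v₀ - m with hc_def
    have hv₀mem : v₀ ∈ S.image a := (S.image a).min'_mem hSimne
    have hc_pos : 0 < c := by
      obtain ⟨i, hiS, hiv⟩ := Finset.mem_image.mp hv₀mem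
      have := (hmemS i).mp hiS
      rw [hc_def, ← hiv]; linarith
    have hcS : ∀ i ∈ S, m + c ≤ a i := by
      intro i hiS
      have : v₀ ≤ a i := Finset.min'_le _ _ (Finset.mem_image_of_mem a hiS)
      rw [hc_def]; linarith
    set χ : Fin n → ℝ := fun i => if i ∈ S then (1:ℝ) else 0 with hχ_def
    set a'' : Fin n → ℝ := fun i => a i - c * χ i with ha''_def
    -- monotone pair for a''
    have hmono'' : ∀ i j, 0 ≤ (a'' i - a'' j) * (b i - b j) := by
      intro i j
      by_cases hi : i ∈ S <;> by_cases hj : j ∈ S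
      · have heq : a'' i - a'' j = a i - a j := by simp [ha''_def, hχ_def, hi, hj]
        rw [heq]; exact hmono i j
      · have haj : a j = m := hout j hj
        have hb : 0 ≤ b i - b j := by
          have h1 := hmono i j
          have h2 : 0 < a i - a j := by
            have := (hmemS i).mp hi; rw [haj]; linarith
          nlinarith
        have heq : a'' i - a'' j = (a i - a j) - c := by
          simp [ha''_def, hχ_def, hi, hj]; ring
        rw [heq]
        have h3 : c ≤ a i - a j := by have := hcS i hi; rw [haj]; linarith
        exact mul_nonneg (by linarith) hb
      · have hai : a i = m := hout i hi
        have hb : b i - b j ≤ 0 := by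
          have h1 := hmono i j
          have h2 : a i - a j < 0 := by
            have := (hmemS j).mp hj; rw [hai]; linarith
          nlinarith
        have heq : a'' i - a'' j = (a i - a j) + c := by
          simp [ha''_def, hχ_def, hi, hj]; ring
        rw [heq]
        have h3 : a i - a j ≤ -c := by have := hcS j hj; rw [hai]; linarith
        nlinarith [hb, h3, hc_pos]
      · have heq : a'' i - a'' j = a i - a j := by simp [ha''_def, hχ_def, hi, hj]
        rw [heq]; exact hmono i j
    -- card bound
    have hNcard : (Finset.image a Finset.univ).card = N + 1 :=
      le_antisymm hcard (Nat.succ_le_of_lt (not_le.mp hN))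
    have hmnot : m ∉ S.image a := by
      intro h
      obtain ⟨i, hiS, hiv⟩ := Finset.mem_image.mp h
      have := (hmemS i).mp hiS
      rw [hiv] at this
      exact lt_irrefl _ this
    have hSim_lt : (S.image a).card < (Finset.image a Finset.univ).card := by
      have hsubset : S.image a ⊆ Finset.image a Finset.univ := by
        intro x hx
        obtain ⟨i, _, hi⟩ := Finset.mem_image.mp hx
        exact Finset.mem_image.mpr ⟨i, Finset.mem_univ i, hi⟩
      have hmi : m ∈ Finset.image a Finset.univ := by
        rw [hm_def]; exact (Finset.image a Finset.univ).min'_mem hne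
      exact Finset.card_lt_card ((Finset.ssubset_iff_of_subset hsubset).mpr ⟨m, hmi, hmnot⟩)
    have hcard'' : (Finset.image a'' Finset.univ).card ≤ N := by
      have hsub : Finset.image a'' Finset.univ ⊆
          insert m (((S.image a).erase v₀).image (fun x => x - c)) := by
        intro x hx
        obtain ⟨i, _, hi⟩ := Finset.mem_image.mp hx
        by_cases hiS : i ∈ S
        · have hxa : x = a i - c := by rw [← hi]; simp [ha''_def, hχ_def, hiS]
          by_cases hv : a i = v₀
          · have hxm : x = m := by rw [hxa, hv, hc_def]; ring
            rw [hxm]; exact Finset.mem_insert_self _ _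
          · apply Finset.mem_insert_of_mem
            exact Finset.mem_image.mpr
              ⟨a i, Finset.mem_erase.mpr ⟨hv, Finset.mem_image_of_mem a hiS⟩, hxa.symm⟩
        · have hxm : x = a i := by rw [← hi]; simp [ha''_def, hχ_def, hiS]
          rw [hxm, hout i hiS]
          exact Finset.mem_insert_self _ _
      have hc1 : 1 ≤ (S.image a).card := Finset.card_pos.mpr hSimne
      calc (Finset.image a'' Finset.univ).card
          ≤ (insert m (((S.image a).erase v₀).image (fun x => x - c))).card :=
            Finset.card_le_card hsub
        _ ≤ (((S.image a).erase v₀).image (fun x => x - c)).card + 1 :=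
            Finset.card_insert_le _ _
        _ ≤ ((S.image a).erase v₀).card + 1 :=
            Nat.add_le_add_right Finset.card_image_le 1
        _ = ((S.image a).card - 1) + 1 := by rw [Finset.card_erase_of_mem hv₀mem]
        _ ≤ N := by omega
    have ihA := ih a'' hcard'' hmono''
    -- cut inequality with t = max of b on Sᶜ
    have hSCimne : ((Sᶜ : Finset (Fin n)).image b).Nonempty := hSCne.image b
    set t : ℝ := ((Sᶜ : Finset (Fin n)).image b).max' hSCimne with ht_def
    have hbC : ∀ j ∈ (Sᶜ : Finset (Fin n)), b j ≤ t :=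
      fun j hj => Finset.le_max' _ _ (Finset.mem_image_of_mem b hj)
    have hbS : ∀ j ∈ S, t ≤ b j := by
      intro j hj
      obtain ⟨j₁, hj₁c, hj₁⟩ :=
        Finset.mem_image.mp (((Sᶜ : Finset (Fin n)).image b).max'_mem hSCimne)
      have haj₁ : a j₁ = m := hout j₁ (Finset.mem_compl.mp hj₁c)
      have h2 : 0 < a j - a j₁ := by
        have := (hmemS j).mp hj; rw [haj₁]; linarith
      have h1 := hmono j j₁
      rw [ht_def, ← hj₁]
      nlinarith
    have hT := ssc_cut X hX hsym b S t hbS hbC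
    -- decompositions
    set P : ℝ := ∑ j ∈ S, b j * ∑ i ∈ S, X i j with hP_def
    set U : ℝ := ∑ j ∈ Sᶜ, b j * ∑ i ∈ S, X i j with hU_def
    set W : ℝ := ∑ j ∈ S, b j * ∑ i ∈ Sᶜ, X i j with hW_def
    have hA1 : ∑ i, ∑ j, X i j * χ i * b j = P + U := by
      have step1 : ∑ i, ∑ j, X i j * χ i * b j = ∑ i ∈ S, ∑ j, X i j * b j := by
        rw [← Finset.sum_add_sum_compl S (fun i => ∑ j, X i j * χ i * b j)]
        have hz : ∑ i ∈ (Sᶜ : Finset (Fin n)), ∑ j, X i j * χ i * b j = 0 := by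
          apply Finset.sum_eq_zero
          intro i hi
          apply Finset.sum_eq_zero
          intro j _
          simp [hχ_def, Finset.mem_compl.mp hi]
        rw [hz, add_zero]
        refine Finset.sum_congr rfl fun i hi => Finset.sum_congr rfl fun j _ => ?_
        simp [hχ_def, hi]
      rw [step1, Finset.sum_comm, ← Finset.sum_add_sum_compl S
        (fun j => ∑ i ∈ S, X i j * b j)]
      rw [hP_def, hU_def]
      congr 1
      · refine Finset.sum_congr rfl fun j _ => ?_
        rw [Finset.mul_sum]
        exact Finset.sum_congr rfl fun i _ => mul_comm _ _
      · refine Finset.sum_congr rfl fun j _ => ?_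
        rw [Finset.mul_sum]
        exact Finset.sum_congr rfl fun i _ => mul_comm _ _
    have hA2 : ∑ i, ∑ j, X i j * χ j * b j = P + W := by
      have step1 : ∑ i, ∑ j, X i j * χ j * b j = ∑ j ∈ S, b j * ∑ i, X i j := by
        rw [Finset.sum_comm, ← Finset.sum_add_sum_compl S
          (fun j => ∑ i, X i j * χ j * b j)]
        have hz : ∑ j ∈ (Sᶜ : Finset (Fin n)), ∑ i, X i j * χ j * b j = 0 := by
          apply Finset.sum_eq_zero
          intro j hj
          apply Finset.sum_eq_zero
          intro i _
          simp [hχ_def, Finset.mem_compl.mp hj]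
        rw [hz, add_zero]
        refine Finset.sum_congr rfl fun j hj => ?_
        rw [Finset.mul_sum]
        refine Finset.sum_congr rfl fun i _ => ?_
        simp [hχ_def, hj]
        ring
      rw [step1]
      have hsplit : ∀ j, (∑ i, X i j) = ∑ i ∈ S, X i j + ∑ i ∈ Sᶜ, X i j :=
        fun j => (Finset.sum_add_sum_compl S _).symm
      rw [hP_def, hW_def, ← Finset.sum_add_distrib]
      refine Finset.sum_congr rfl fun j _ => ?_
      rw [hsplit j]; ring
    have hdec1 : ∑ i, ∑ j, X i j * a i * b j
        = (∑ i, ∑ j, X i j * a'' i * b j) + c * ∑ i, ∑ j, X i j * χ i * b j := by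
      rw [Finset.mul_sum, ← Finset.sum_add_distrib]
      refine Finset.sum_congr rfl fun i _ => ?_
      rw [Finset.mul_sum, ← Finset.sum_add_distrib]
      refine Finset.sum_congr rfl fun j _ => ?_
      simp only [ha''_def]
      ring
    have hdec2 : ∑ i, ∑ j, X i j * a j * b j
        = (∑ i, ∑ j, X i j * a'' j * b j) + c * ∑ i, ∑ j, X i j * χ j * b j := by
      rw [Finset.mul_sum, ← Finset.sum_add_distrib]
      refine Finset.sum_congr rfl fun i _ => ?_
      rw [Finset.mul_sum, ← Finset.sum_add_distrib]
      refine Finset.sum_congr rfl fun j _ => ?_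
      simp only [ha''_def]
      ring
    rw [hdec1, hdec2, hA1, hA2]
    have hfin : c * (P + U) ≤ c * (P + W) :=
      mul_le_mul_of_nonneg_left (add_le_add_right hT P) hc_pos.le
    linarith

theorem sum_symmetric_chebyshev {n : ℕ} (X : Matrix (Fin n) (Fin n) ℝ)
    (hX : ∀ i j, 0 ≤ X i j) (hsym : ∀ j, ∑ k, X j k = ∑ k, X k j)
    (a b : Fin n → ℝ) (hmono : ∀ i j, 0 ≤ (a i - a j) * (b i - b j)) :
    ∑ i, a i * X.mulVec b i ≤ ∑ i, X.mulVec (a * b) i := by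
  have l1 : ∑ i, a i * X.mulVec b i = ∑ i, ∑ j, X i j * a i * b j := by
    simp only [mulVec, dotProduct, Finset.mul_sum]
    exact Finset.sum_congr rfl fun i _ => Finset.sum_congr rfl fun j _ => by ring
  have l2 : ∑ i, X.mulVec (a * b) i = ∑ i, ∑ j, X i j * a j * b j := by
    simp only [mulVec, dotProduct, Pi.mul_apply]
    exact Finset.sum_congr rfl fun i _ => Finset.sum_congr rfl fun j _ => by ring
  rw [l1, l2]
  exact ssc_key X hX hsym b _ a le_rfl hmono
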